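/- (3op EFT over addition) Let x, y ∈ D with base β = 2 admit representations such that e(x) ≥ e(y), and assume nearest rounding. Define z = fl(x+y), w = fl(z−x), zz = fl(y−w). Then w = z − x and zz = y − w exactly, and consequently z + zz = x + y. -/
import Mathlib


/-- Dekker's floating point number system as a set of reals. -/
def Dekker (β : ℤ) (t : ℕ) (Emin Emax : ℤ) : Set ℝ :=
  {x | ∃ m e : ℤ, |m| < β ^ t ∧ Emin ≤ e ∧ e ≤ Emax ∧ x = (m : ℝ) * (β : ℝ) ^ e}

lemma memD {t : ℕ} {Emin Emax : ℤ} (m e : ℤ) (hm : |m| < 2 ^ t)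
    (h1 : Emin ≤ e) (h2 : e ≤ Emax) : ((m : ℝ) * (2:ℝ) ^ e) ∈ Dekker 2 t Emin Emax := by
  exact ⟨m, e, hm, h1, h2, by norm_num⟩

lemma flfix {t : ℕ} {Emin Emax : ℤ} {fl : ℝ → ℝ}
    (hnear : ∀ x, ∀ a ∈ Dekker 2 t Emin Emax, |fl x - x| ≤ |a - x|)
    {a : ℝ} (ha : a ∈ Dekker 2 t Emin Emax) : fl a = a := by
  have := hnear a a ha
  simp at this
  linarith

lemma boundD {t : ℕ} {Emin Emax : ℤ} {a : ℝ} (ha : a ∈ Dekker 2 t Emin Emax) :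
    |a| ≤ ((2:ℝ) ^ t - 1) * (2:ℝ) ^ Emax := by
  obtain ⟨m, e, hm, h1, h2, rfl⟩ := ha
  have h2e : (2:ℝ) ^ e ≤ (2:ℝ) ^ Emax := by
    exact zpow_le_zpow_right₀ one_le_two h2
  have hme : (|m| : ℝ) ≤ (2:ℝ) ^ t - 1 := by
    have : |m| ≤ 2 ^ t - 1 := by omega
    calc (|m| : ℝ) ≤ ((2:ℤ)^t - 1 : ℤ) := by exact_mod_cast this
    _ = (2:ℝ)^t - 1 := by push_cast; ring
  have hb : ((2:ℤ):ℝ) = (2:ℝ) := by norm_num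
  have habs2 : |(2:ℝ)^e| = (2:ℝ)^e := abs_of_pos (zpow_pos two_pos e)
  rw [hb, abs_mul, habs2]
  have hpos : (0:ℝ) ≤ (2:ℝ)^e := le_of_lt (zpow_pos two_pos e)
  calc |(m:ℝ)| * (2:ℝ)^e ≤ ((2:ℝ)^t - 1) * (2:ℝ)^e := by
        exact mul_le_mul_of_nonneg_right hme hpos
    _ ≤ ((2:ℝ)^t - 1) * (2:ℝ)^Emax := by
        apply mul_le_mul_of_nonneg_left h2e
        have : (1:ℝ) ≤ (2:ℝ)^t := one_le_pow₀ one_le_two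
        linarith

lemma coefD {q c : ℤ} {E : ℤ} (hc : 0 ≤ c)
    (h : |(q:ℝ) * (2:ℝ)^E| ≤ (c:ℝ) * (2:ℝ)^E) : |q| ≤ c := by
  have hpos : (0:ℝ) < (2:ℝ)^E := zpow_pos two_pos E
  rw [abs_mul, abs_of_pos hpos] at h
  have h2 : |(q:ℝ)| ≤ (c:ℝ) := le_of_mul_le_mul_right h hpos
  exact_mod_cast h2

lemma multD {t : ℕ} {Emin Emax : ℤ} (ht : 1 ≤ t) {a : ℝ} (ha : a ∈ Dekker 2 t Emin Emax)
    (E : ℤ) (hE : ((2:ℝ) ^ t - 1) * (2:ℝ) ^ (E - 1) < |a|) :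
    ∃ q : ℤ, a = (q:ℝ) * (2:ℝ)^E := by
  obtain ⟨m, e, hm, h1, h2, rfl⟩ := ha
  have hb : ((2:ℤ):ℝ) = (2:ℝ) := by norm_num
  rw [hb] at hE ⊢
  by_cases hcase : E ≤ e
  · refine ⟨m * 2 ^ (e - E).toNat, ?_⟩
    have he : e = E + ((e - E).toNat : ℤ) := by omega
    rw [he, zpow_add₀ (two_ne_zero), zpow_natCast]
    push_cast
    ring_nf
    rw [Int.toNat_natCast]
  · exfalso
    push_neg at hcase
    have hee : e ≤ E - 1 := by omega
    have h2e : (2:ℝ) ^ e ≤ (2:ℝ) ^ (E-1) := zpow_le_zpow_right₀ one_le_two hee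
    have hme : (|m|:ℝ) ≤ (2:ℝ) ^ t - 1 := by
      have : |m| ≤ 2 ^ t - 1 := by omega
      calc (|m| : ℝ) ≤ ((2:ℤ)^t - 1 : ℤ) := by exact_mod_cast this
      _ = (2:ℝ)^t - 1 := by push_cast; ring
    have habs2 : |(2:ℝ)^e| = (2:ℝ)^e := abs_of_pos (zpow_pos two_pos e)
    rw [abs_mul, habs2] at hE
    have hpos : (0:ℝ) ≤ (2:ℝ)^e := le_of_lt (zpow_pos two_pos e)
    have hnn : (0:ℝ) ≤ (2:ℝ)^t - 1 := by
      have : (1:ℝ) ≤ (2:ℝ)^t := one_le_pow₀ one_le_two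
      linarith
    have : |(m:ℝ)| * (2:ℝ)^e ≤ ((2:ℝ)^t - 1) * (2:ℝ)^(E-1) := by
      calc |(m:ℝ)| * (2:ℝ)^e ≤ ((2:ℝ)^t - 1) * (2:ℝ)^e :=
            mul_le_mul_of_nonneg_right hme hpos
      _ ≤ ((2:ℝ)^t - 1) * (2:ℝ)^(E-1) := mul_le_mul_of_nonneg_left h2e hnn
    linarith

lemma memD2 {t : ℕ} {Emin Emax : ℤ} (ht : 1 ≤ t) (q E : ℤ) (hq : |q| ≤ 2 ^ t)
    (h1 : Emin ≤ E) (h2 : E + 1 ≤ Emax) : ((q : ℝ) * (2:ℝ) ^ E) ∈ Dekker 2 t Emin Emax := by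
  rcases lt_or_eq_of_le hq with h | h
  · exact memD q E h h1 (by omega)
  · obtain ⟨u, rfl⟩ : ∃ u, t = u + 1 := ⟨t - 1, by omega⟩
    have hq2 : q = 2 ^ (u+1) ∨ q = -(2 ^ (u+1)) := (abs_eq (by positivity : (0:ℤ) ≤ 2 ^ (u+1))).mp h
    have hE1 : (2:ℝ)^(E+1) = 2 * (2:ℝ)^E := by
      rw [zpow_add₀ two_ne_zero]; ring
    have habs : |(2:ℤ)^u| < 2^(u+1) := by
      rw [abs_of_nonneg (by positivity)]
      exact pow_lt_pow_right₀ one_lt_two (by omega)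
    have habs2 : |-((2:ℤ)^u)| < 2^(u+1) := by rwa [abs_neg]
    have key : ∀ (a b : ℝ), a = b → b ∈ Dekker 2 (u+1) Emin Emax →
        a ∈ Dekker 2 (u+1) Emin Emax := fun a b hab hb => hab ▸ hb
    rcases hq2 with h' | h' <;> subst h'
    · apply key _ _ ?_ (memD (Emin := Emin) (2^u) (E+1) habs (by omega) h2)
      push_cast; rw [hE1, pow_succ]; ring
    · apply key _ _ ?_ (memD (Emin := Emin) (-(2^u)) (E+1) habs2 (by omega) h2)
      push_cast; rw [hE1, pow_succ]; ring

lemma pw (k : ℕ) (c : ℤ) : (2:ℝ)^(c + (k:ℤ)) = (2:ℝ)^c * (2:ℝ)^k := by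
  rw [zpow_add₀ two_ne_zero, zpow_natCast]

lemma gridD {t : ℕ} {Emin Emax : ℤ} (ht : 1 ≤ t) (M : ℤ) (j : ℕ) (μ : ℤ)
    (hM1 : 2^(t+j) ≤ M) (hM2 : M < 2^(t+j+1))
    (hμ1 : Emin ≤ μ)
    (hB1 : (M:ℝ) * (2:ℝ)^μ ≤ ((2:ℝ)^t - 1) * (2:ℝ)^Emax) :
    (μ + (j:ℤ) + 1 ≤ Emax) ∧
    ∃ a ∈ Dekker 2 t Emin Emax, |a - (M:ℝ)*(2:ℝ)^μ| ≤ (2:ℝ)^(μ + (j:ℤ)) := by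
  have hposμ : (0:ℝ) < (2:ℝ)^μ := zpow_pos two_pos μ
  have hone : (1:ℝ) ≤ (2:ℝ)^t := one_le_pow₀ one_le_two
  have hMR : ((2:ℝ)^(t+j) : ℝ) ≤ (M:ℝ) := by exact_mod_cast hM1
  have hσ1 : (2:ℝ)^(t+j) * (2:ℝ)^μ ≤ (M:ℝ) * (2:ℝ)^μ :=
    mul_le_mul_of_nonneg_right hMR hposμ.le
  have h4 : (2:ℝ)^t * (2:ℝ)^(μ+(j:ℤ)) = (2:ℝ)^(t+j) * (2:ℝ)^μ := by
    rw [pw j μ, pow_add]; ring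
  have hE : μ + (j:ℤ) + 1 ≤ Emax := by
    by_contra hc
    push_neg at hc
    have hc2 : Emax ≤ μ + (j:ℤ) := by omega
    have h1 : (2:ℝ)^Emax ≤ (2:ℝ)^(μ + (j:ℤ)) := zpow_le_zpow_right₀ one_le_two hc2
    have h2 : ((2:ℝ)^t - 1) * (2:ℝ)^Emax ≤ ((2:ℝ)^t - 1) * (2:ℝ)^(μ+(j:ℤ)) :=
      mul_le_mul_of_nonneg_left h1 (by linarith)
    have h3 : ((2:ℝ)^t - 1) * (2:ℝ)^(μ+(j:ℤ)) < (2:ℝ)^t * (2:ℝ)^(μ+(j:ℤ)) := by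
      have := zpow_pos (two_pos : (0:ℝ) < 2) (μ+(j:ℤ))
      nlinarith
    linarith
  refine ⟨hE, ?_⟩
  set n : ℤ := (M + 2^j) / 2^(j+1) with hn
  have hdm := Int.mul_ediv_add_emod (M + 2^j) (2^(j+1))
  set r : ℤ := (M + 2^j) % 2^(j+1) with hrdef
  have hr0 : 0 ≤ r := Int.emod_nonneg _ (by positivity)
  have hr1 : r < 2^(j+1) := Int.emod_lt_of_pos _ (by positivity)
  have e1 : (2:ℤ)^(j+1) = 2 * 2^j := by rw [pow_succ]; ring
  have e2 : (2:ℤ)^(t+j) = 2^t * 2^j := pow_add 2 t j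
  have e3 : (2:ℤ)^(t+j+1) = 2 * (2^t * 2^j) := by rw [pow_succ, e2]; ring
  have hQ : (2:ℤ) ≤ 2^t := by
    calc (2:ℤ) = 2^1 := (pow_one 2).symm
    _ ≤ 2^t := pow_le_pow_right₀ one_le_two ht
  have hP1 : (1:ℤ) ≤ 2^j := one_le_pow₀ one_le_two
  have key : (2*2^j) * n = M + 2^j - r := by rw [← e1]; linarith [hdm]
  have hq2 : (2:ℤ) * 2^j ≤ 2^t * 2^j := mul_le_mul_of_nonneg_right hQ (by positivity)
  have hM1' : 2^t * 2^j ≤ M := by rw [← e2]; exact hM1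
  have hM2' : M < 2*((2:ℤ)^t*2^j) := by rw [← e3]; exact hM2
  have hub : n * 2^(j+1) - M ≤ 2^j := by rw [e1]; linarith [key, hr0]
  have hlb : -(2^j) ≤ n * 2^(j+1) - M := by rw [e1]; linarith [key, hr1]
  have hprodpos : 0 < (2*2^j) * n := by linarith [key, hr1]
  have hn0 : 0 < n := by
    by_contra hcn
    push_neg at hcn
    have : (2*2^j) * n ≤ 0 := mul_nonpos_of_nonneg_of_nonpos (by positivity) hcn
    linarith
  have hnle : n ≤ 2^t := by
    by_contra hcn
    push_neg at hcn
    have h5 : (2*2^j) * (2^t + 1) ≤ (2*2^j)*n :=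
      mul_le_mul_of_nonneg_left (by omega) (by positivity)
    linarith [key, hr0]
  -- the grid point
  refine ⟨(n:ℝ) * (2:ℝ)^(μ + (j:ℤ) + 1), ?_, ?_⟩
  · rcases lt_or_eq_of_le hnle with hlt | heq
    · exact memD n (μ + (j:ℤ) + 1) (by rw [abs_of_pos hn0]; exact hlt) (by omega) hE
    · -- n = 2^t : show μ+j+2 ≤ Emax, then use memD2
      have hMlb : 2*(2^t*2^j) - 2^j ≤ M := by
        have : (2*2^j) * n = 2*(2^t*2^j) := by rw [← heq]; ring
        linarith [key, hr0]
      have hE2 : μ + (j:ℤ) + 1 + 1 ≤ Emax := by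
        by_contra hc
        push_neg at hc
        have hc2 : Emax ≤ μ + (j:ℤ) + 1 := by omega
        have h1 : (2:ℝ)^Emax ≤ (2:ℝ)^(μ + (j:ℤ) + 1) := zpow_le_zpow_right₀ one_le_two hc2
        have h2 : ((2:ℝ)^t - 1) * (2:ℝ)^Emax ≤ ((2:ℝ)^t - 1) * (2:ℝ)^(μ+(j:ℤ)+1) :=
          mul_le_mul_of_nonneg_left h1 (by linarith)
        have hsp : (2:ℝ)^(μ+(j:ℤ)+1) = 2 * ((2:ℝ)^μ * (2:ℝ)^j) := by
          rw [show μ+(j:ℤ)+1 = (μ+1) + (j:ℤ) by ring, pw j (μ+1),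
            zpow_add₀ (two_ne_zero) μ 1]
          ring
        have hMlbR : (2*((2:ℝ)^t*(2:ℝ)^j) - (2:ℝ)^j) ≤ (M:ℝ) := by exact_mod_cast hMlb
        have hσ2 : (2*((2:ℝ)^t*(2:ℝ)^j) - (2:ℝ)^j) * (2:ℝ)^μ ≤ (M:ℝ) * (2:ℝ)^μ :=
          mul_le_mul_of_nonneg_right hMlbR hposμ.le
        have hjpos : (0:ℝ) < (2:ℝ)^j * (2:ℝ)^μ := by positivity
        rw [hsp] at h2
        nlinarith [hB1, hσ2, h2, hjpos]
      have : |n| ≤ 2^t := by rw [abs_of_pos hn0]; exact hnle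
      exact memD2 ht n (μ + (j:ℤ) + 1) this (by omega) hE2
  · have hdiff : (n:ℝ) * (2:ℝ)^(μ + (j:ℤ) + 1) - (M:ℝ)*(2:ℝ)^μ
        = ((n * 2^(j+1) - M : ℤ) : ℝ) * (2:ℝ)^μ := by
      have hsp : (2:ℝ)^(μ+(j:ℤ)+1) = (2:ℝ)^μ * (2:ℝ)^(j+1) := by
        rw [show μ+(j:ℤ)+1 = μ + ((j+1 : ℕ) : ℤ) by push_cast; ring, pw (j+1) μ]
      rw [hsp]
      push_cast
      ring
    rw [hdiff, abs_mul, abs_of_pos hposμ, pw j μ]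
    have habs : |((n * 2^(j+1) - M : ℤ) : ℝ)| ≤ ((2^j : ℤ) : ℝ) := by
      exact_mod_cast abs_le.mpr ⟨hlb, hub⟩
    calc |((n * 2^(j+1) - M : ℤ) : ℝ)| * (2:ℝ)^μ ≤ ((2^j : ℤ):ℝ) * (2:ℝ)^μ :=
          mul_le_mul_of_nonneg_right habs hposμ.le
    _ = (2:ℝ)^μ * (2:ℝ)^j := by push_cast; ring

lemma absle {t : ℕ} (m e : ℤ) (hm : |m| < 2^t) :
    |(m:ℝ) * (2:ℝ)^e| ≤ ((2:ℝ)^t - 1) * (2:ℝ)^e := by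
  have habs2 : |(2:ℝ)^e| = (2:ℝ)^e := abs_of_pos (zpow_pos two_pos e)
  rw [abs_mul, habs2]
  apply mul_le_mul_of_nonneg_right _ (zpow_pos two_pos e).le
  have h : |m| ≤ 2^t - 1 := by omega
  have h' : ((|m|:ℤ):ℝ) ≤ (((2:ℤ)^t - 1 : ℤ):ℝ) := by exact_mod_cast h
  push_cast at h'
  exact h'

lemma auxD {t : ℕ} {Emin Emax : ℤ} (ht : 1 ≤ t)
    (fl : ℝ → ℝ)
    (hmem : ∀ x, fl x ∈ Dekker 2 t Emin Emax)
    (hnear : ∀ x, ∀ a ∈ Dekker 2 t Emin Emax, |fl x - x| ≤ |a - x|)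
    (mx ex my ey : ℤ)
    (hmx : |mx| < 2 ^ t) (hex1 : Emin ≤ ex) (hex2 : ex ≤ Emax)
    (hmy : |my| < 2 ^ t) (hey1 : Emin ≤ ey) (hey2 : ey ≤ Emax)
    (hord : ey ≤ ex)
    (x y : ℝ)
    (hx : x = (mx : ℝ) * (2 : ℝ) ^ ex) (hy : y = (my : ℝ) * (2 : ℝ) ^ ey)
    (hsum : 0 ≤ x + y) :
    (fl (x+y) - x ∈ Dekker 2 t Emin Emax) ∧ ((x + y) - fl (x+y) ∈ Dekker 2 t Emin Emax) := by
  have hQ2 : (2:ℤ) ≤ 2^t := by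
    calc (2:ℤ) = 2^1 := (pow_one 2).symm
    _ ≤ 2^t := pow_le_pow_right₀ one_le_two ht
  have honeR : (1:ℝ) ≤ (2:ℝ)^t := one_le_pow₀ one_le_two
  have hposy : (0:ℝ) < (2:ℝ)^ey := zpow_pos two_pos ey
  set d : ℕ := (ex - ey).toNat with hdd
  have hexd : ex = ey + (d:ℤ) := by
    have : ((ex - ey).toNat : ℤ) = ex - ey := Int.toNat_of_nonneg (by omega)
    omega
  set M : ℤ := mx * 2^d + my with hM
  have hσ : x + y = (M:ℝ) * (2:ℝ)^ey := by
    rw [hx, hy, hexd, pw d ey, hM]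
    push_cast
    ring
  have hM0 : 0 ≤ M := by
    by_contra hc
    push_neg at hc
    have : (M:ℝ) < 0 := by exact_mod_cast hc
    nlinarith [hσ, hsum, hposy]
  have hxD : x ∈ Dekker 2 t Emin Emax := hx ▸ memD mx ex hmx hex1 hex2
  have hyD : y ∈ Dekker 2 t Emin Emax := hy ▸ memD my ey hmy hey1 hey2
  have hyb : |y| ≤ ((2:ℝ)^t - 1) * (2:ℝ)^ey := hy ▸ absle my ey hmy
  have hzy : |fl (x+y) - (x+y)| ≤ |y| := by
    have h := hnear (x+y) x hxD
    have : |x - (x+y)| = |y| := by rw [show x - (x+y) = -y by ring, abs_neg]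
    linarith
  rcases lt_or_ge M (2^t) with hMlt | hMge
  · -- exact case : x+y ∈ D
    have hσD : x + y ∈ Dekker 2 t Emin Emax := by
      rw [hσ]
      exact memD M ey (by rw [abs_of_nonneg hM0]; exact hMlt) hey1 hey2
    have hfl : fl (x+y) = x + y := flfix hnear hσD
    constructor
    · rw [hfl, show x + y - x = y from by ring]
      exact hyD
    · rw [hfl, sub_self]
      have := memD (t := t) (Emin := Emin) 0 ex (by simpa using (by positivity : (0:ℤ) < 2^t)) hex1 hex2
      simpa using this
  · -- inexact case
    have hMgeR : ((2:ℝ))^t ≤ (M:ℝ) := by exact_mod_cast hMge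
    have hσlow : (2:ℝ)^t * (2:ℝ)^ey ≤ x + y := by
      rw [hσ]; exact mul_le_mul_of_nonneg_right hMgeR hposy.le
    rcases le_or_gt (x + y) (((2:ℝ)^t - 1) * (2:ℝ)^Emax) with hle | hover
    · -- no overflow
      obtain ⟨j, hM1, hM2⟩ : ∃ j : ℕ, (2:ℤ)^(t+j) ≤ M ∧ M < (2:ℤ)^(t+j+1) := by
        obtain ⟨N, hMN⟩ : ∃ N : ℕ, (N:ℤ) = M := ⟨M.toNat, Int.toNat_of_nonneg hM0⟩
        have hMt : 2^t ≤ N := by exact_mod_cast hMN ▸ hMge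
        have hN0 : N ≠ 0 := by
          have : (2:ℕ) ≤ 2^t := by exact_mod_cast hQ2
          omega
        have hL1 : 2^(Nat.log 2 N) ≤ N := Nat.pow_log_le_self 2 hN0
        have hL2 : N < 2^(Nat.log 2 N + 1) := Nat.lt_pow_succ_log_self (by norm_num) N
        have htL : t ≤ Nat.log 2 N := by
          by_contra hc
          push_neg at hc
          have : (2:ℕ)^(Nat.log 2 N + 1) ≤ 2^t := Nat.pow_le_pow_right (by norm_num) (by omega)
          omega
        refine ⟨Nat.log 2 N - t, ?_, ?_⟩
        · rw [← hMN, show t + (Nat.log 2 N - t) = Nat.log 2 N by omega]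
          exact_mod_cast hL1
        · rw [← hMN, show t + (Nat.log 2 N - t) + 1 = Nat.log 2 N + 1 by omega]
          exact_mod_cast hL2
      obtain ⟨hE, a, haD, hadist⟩ := gridD ht M j ey hM1 hM2 hey1 (by rw [← hσ]; exact hle)
      have hz1 : |fl (x+y) - (x+y)| ≤ (2:ℝ)^(ey + (j:ℤ)) :=
        le_trans (hnear (x+y) a haD) (by rw [← hσ] at hadist; exact hadist)
      have hEpos : (0:ℝ) < (2:ℝ)^(ey + (j:ℤ)) := zpow_pos two_pos _
      have hE1pos : (0:ℝ) < (2:ℝ)^(ey + (j:ℤ) - 1) := zpow_pos two_pos _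
      have hEsplit : (2:ℝ)^(ey + (j:ℤ)) = 2 * (2:ℝ)^(ey + (j:ℤ) - 1) := by
        have h := zpow_add₀ (two_ne_zero (α := ℝ)) (ey + (j:ℤ) - 1) 1
        rw [show ey + (j:ℤ) - 1 + 1 = ey + (j:ℤ) by ring] at h
        rw [h, zpow_one]; ring
      have hσE : (2:ℝ)^t * (2:ℝ)^(ey + (j:ℤ)) ≤ x + y := by
        have h4 : (2:ℝ)^t * (2:ℝ)^(ey + (j:ℤ)) = (2:ℝ)^(t+j) * (2:ℝ)^ey := by
          rw [pw j ey, pow_add]; ring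
        rw [h4, hσ]
        apply mul_le_mul_of_nonneg_right _ hposy.le
        exact_mod_cast hM1
      have h2t : (2:ℝ) ≤ (2:ℝ)^t := by
        calc (2:ℝ) = 2^1 := (pow_one 2).symm
        _ ≤ _ := pow_le_pow_right₀ one_le_two ht
      have heyE : (2:ℝ)^ey ≤ (2:ℝ)^(ey + (j:ℤ)) := zpow_le_zpow_right₀ one_le_two (by omega)
      have hzlow : ((2:ℝ)^t - 1) * (2:ℝ)^(ey + (j:ℤ) - 1) < |fl (x+y)| := by
        have hfl_ge : x + y - (2:ℝ)^(ey + (j:ℤ)) ≤ fl (x+y) := by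
          have h := (abs_le.mp hz1).1
          linarith
        have hBA : 2 * (2:ℝ)^(ey + (j:ℤ) - 1) ≤ (2:ℝ)^t * (2:ℝ)^(ey + (j:ℤ) - 1) :=
          mul_le_mul_of_nonneg_right h2t hE1pos.le
        rw [hEsplit] at hσE hfl_ge
        linarith [le_abs_self (fl (x+y))]
      obtain ⟨qz, hqz⟩ := multD ht (hmem (x+y)) (ey + (j:ℤ)) hzlow
      obtain ⟨qx, hqx⟩ : ∃ qx : ℤ, x = (qx:ℝ) * (2:ℝ)^(ey + (j:ℤ)) := by
        rcases Nat.eq_zero_or_pos j with hj0 | hjpos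
        · refine ⟨mx * 2^d, ?_⟩
          rw [hx, hexd, pw d ey, hj0]
          push_cast
          ring
        · apply multD ht hxD
          have hyx : (x + y) - |y| ≤ x := by linarith [le_abs_self y, neg_abs_le y]
          have heyE1 : (2:ℝ)^ey ≤ (2:ℝ)^(ey + (j:ℤ) - 1) :=
            zpow_le_zpow_right₀ one_le_two (by omega)
          have hy2 : ((2:ℝ)^t - 1) * (2:ℝ)^ey ≤ ((2:ℝ)^t - 1) * (2:ℝ)^(ey + (j:ℤ) - 1) :=
            mul_le_mul_of_nonneg_left heyE1 (by linarith)
          rw [hEsplit] at hσE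
          linarith [le_abs_self x, hyb, hE1pos, hyx]
      have hqzx : fl (x+y) - x = ((qz - qx : ℤ):ℝ) * (2:ℝ)^(ey + (j:ℤ)) := by
        rw [hqz, hqx]; push_cast; ring
      constructor
      · have htri : |fl (x+y) - x| ≤ (((2:ℤ)^t : ℤ):ℝ) * (2:ℝ)^(ey + (j:ℤ)) := by
          have h5 : |fl (x+y) - x| ≤ |fl (x+y) - (x+y)| + |y| := by
            have : fl (x+y) - x = (fl (x+y) - (x+y)) + y := by ring
            rw [this]
            exact abs_add_le _ _
          have h6 : ((2:ℝ)^t - 1) * (2:ℝ)^ey ≤ ((2:ℝ)^t - 1) * (2:ℝ)^(ey + (j:ℤ)) :=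
            mul_le_mul_of_nonneg_left heyE (by linarith)
          have h7 : (((2:ℤ)^t : ℤ):ℝ) = (2:ℝ)^t := by push_cast; ring
          rw [h7]
          linarith [hz1, hyb, h5, h6]
        have hcoef : |qz - qx| ≤ 2^t := by
          apply coefD (E := ey + (j:ℤ)) (by positivity)
          rw [← hqzx]
          exact htri
        rw [hqzx]
        exact memD2 ht (qz - qx) (ey + (j:ℤ)) hcoef (by omega) (by omega)
      · set p : ℤ := M - qz * 2^j with hp
        have hpv : (x+y) - fl (x+y) = (p:ℝ) * (2:ℝ)^ey := by
          rw [hqz, hσ, pw j ey, hp]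
          push_cast
          ring
        have hpb : |(p:ℝ) * (2:ℝ)^ey| ≤ (((2:ℤ)^t - 1 : ℤ):ℝ) * (2:ℝ)^ey := by
          rw [← hpv, abs_sub_comm]
          calc |fl (x+y) - (x+y)| ≤ |y| := hzy
          _ ≤ ((2:ℝ)^t - 1) * (2:ℝ)^ey := hyb
          _ = (((2:ℤ)^t - 1 : ℤ):ℝ) * (2:ℝ)^ey := by push_cast; ring
        have hpc : |p| ≤ 2^t - 1 := coefD (by omega) hpb
        rw [hpv]
        exact memD p ey (by omega) hey1 hey2
    · -- overflow : z = maxD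
      have hmaxD : (((2:ℤ)^t - 1 : ℤ):ℝ) * (2:ℝ)^Emax ∈ Dekker 2 t Emin Emax :=
        memD (2^t - 1) Emax (by rw [abs_of_nonneg (by omega)]; omega) (le_trans hey1 hey2) le_rfl
      have hcast : (((2:ℤ)^t - 1 : ℤ):ℝ) = (2:ℝ)^t - 1 := by push_cast; ring
      set R : ℝ := ((2:ℝ)^t - 1) * (2:ℝ)^Emax with hR
      have hmaxD' : R ∈ Dekker 2 t Emin Emax := by rw [hR, ← hcast]; exact hmaxD
      have hz1 := hnear (x+y) R hmaxD'
      have hzb : |fl (x+y)| ≤ R := boundD (hmem (x+y))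
      have hxb : |x| ≤ R := boundD hxD
      have h1 : |fl (x+y) - (x+y)| = (x+y) - fl (x+y) := by
        rw [abs_of_nonpos (by nlinarith [le_abs_self (fl (x+y)), abs_nonneg (fl (x+y))])]
        ring
      have h2 : |R - (x+y)| = (x+y) - R := by
        rw [abs_of_nonpos (by linarith)]; ring
      have hzR : fl (x+y) = R := by
        have hle2 : fl (x+y) ≤ R := le_of_abs_le hzb
        rw [h1, h2] at hz1
        linarith
      have hypos : 0 < y := by
        have : x ≤ R := le_of_abs_le hxb
        linarith
      -- fl(x+y) - x  = q * 2^ey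
      obtain ⟨K, hK⟩ : ∃ K : ℕ, Emax = ey + (K:ℤ) := ⟨(Emax - ey).toNat, by omega⟩
      set q : ℤ := (2^t - 1) * 2^K - mx * 2^d with hq
      have hqv : fl (x+y) - x = (q:ℝ) * (2:ℝ)^ey := by
        rw [hzR, hR, hx, hq, hexd, hK, pw K ey, pw d ey]
        push_cast
        ring
      have hq0 : 0 ≤ fl (x+y) - x := by
        rw [hzR]; linarith [le_of_abs_le hxb]
      have hqy : fl (x+y) - x ≤ ((2:ℝ)^t - 1) * (2:ℝ)^ey := by
        have : fl (x+y) - x = y - ((x+y) - fl (x+y)) := by ring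
        rw [this]
        have h3 : 0 ≤ (x+y) - fl (x+y) := by rw [hzR]; linarith
        linarith [le_of_abs_le hyb]
      have hqc : |q| ≤ 2^t - 1 := by
        apply coefD (E := ey) (by omega)
        rw [← hqv] at *
        rw [abs_of_nonneg hq0]
        calc fl (x+y) - x ≤ ((2:ℝ)^t - 1) * (2:ℝ)^ey := hqy
        _ = (((2:ℤ)^t - 1:ℤ):ℝ) * (2:ℝ)^ey := by push_cast; ring
      constructor
      · rw [hqv]
        exact memD q ey (by omega) hey1 hey2
      · set p : ℤ := M - (2^t - 1) * 2^K with hp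
        have hpv : (x+y) - fl (x+y) = (p:ℝ) * (2:ℝ)^ey := by
          rw [hzR, hR, hσ, hp, hK, pw K ey]
          push_cast
          ring
        have hp0 : 0 ≤ (x+y) - fl (x+y) := by rw [hzR]; linarith
        have hpy : (x+y) - fl (x+y) ≤ ((2:ℝ)^t - 1) * (2:ℝ)^ey := by
          rw [← h1]
          calc |fl (x+y) - (x+y)| ≤ |y| := hzy
          _ ≤ _ := hyb
        have hpc : |p| ≤ 2^t - 1 := by
          apply coefD (E := ey) (by omega)
          rw [← hpv, abs_of_nonneg hp0]
          calc (x+y) - fl (x+y) ≤ ((2:ℝ)^t - 1) * (2:ℝ)^ey := hpy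
          _ = (((2:ℤ)^t - 1:ℤ):ℝ) * (2:ℝ)^ey := by push_cast; ring
        rw [hpv]
        exact memD p ey (by omega) hey1 hey2

lemma negD {t : ℕ} {Emin Emax : ℤ} {a : ℝ} (ha : a ∈ Dekker 2 t Emin Emax) :
    -a ∈ Dekker 2 t Emin Emax := by
  obtain ⟨m, e, hm, h1, h2, rfl⟩ := ha
  exact ⟨-m, e, by rwa [abs_neg], h1, h2, by push_cast; ring⟩

/-- the 3op error free transformation over addition in Dekker's binary system. -/
theorem dekker_3op_eft_addition
    (t : ℕ) (Emin Emax : ℤ) (ht : 1 ≤ t)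
    (fl : ℝ → ℝ)
    (hmem : ∀ x, fl x ∈ Dekker 2 t Emin Emax)
    (hnear : ∀ x, ∀ a ∈ Dekker 2 t Emin Emax, |fl x - x| ≤ |a - x|)
    (hneg : ∀ x, fl (-x) = -fl x)
    (mx ex my ey : ℤ)
    (hmx : |mx| < 2 ^ t) (hex1 : Emin ≤ ex) (hex2 : ex ≤ Emax)
    (hmy : |my| < 2 ^ t) (hey1 : Emin ≤ ey) (hey2 : ey ≤ Emax)
    (hord : ey ≤ ex)
    (x y z w zz : ℝ)
    (hx : x = (mx : ℝ) * (2 : ℝ) ^ ex) (hy : y = (my : ℝ) * (2 : ℝ) ^ ey)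
    (hz : z = fl (x + y)) (hw : w = fl (z - x)) (hzz : zz = fl (y - w)) :
    w = z - x ∧ zz = y - w ∧ z + zz = x + y := by
  have key : (z - x ∈ Dekker 2 t Emin Emax) ∧ ((x + y) - z ∈ Dekker 2 t Emin Emax) := by
    rcases le_or_gt 0 (x + y) with hs | hs
    · obtain ⟨h1, h2⟩ := auxD ht fl hmem hnear mx ex my ey hmx hex1 hex2 hmy hey1 hey2 hord
        x y hx hy hs
      rw [← hz] at h1 h2
      exact ⟨h1, h2⟩
    · obtain ⟨h1, h2⟩ := auxD ht fl hmem hnear (-mx) ex (-my) ey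
        (by rwa [abs_neg]) hex1 hex2 (by rwa [abs_neg]) hey1 hey2 hord
        (-x) (-y) (by rw [hx]; push_cast; ring) (by rw [hy]; push_cast; ring)
        (by linarith)
      have e1 : fl (-x + -y) = -z := by
        rw [show (-x) + (-y) = -(x+y) by ring, hneg, hz]
      rw [e1] at h1 h2
      constructor
      · have := negD h1
        have e2 : -(-z - -x) = z - x := by ring
        rwa [e2] at this
      · have := negD h2
        have e3 : -(-x + -y - -z) = (x + y) - z := by ring
        rwa [e3] at this
  have hw' : w = z - x := by
    rw [hw]
    exact flfix hnear key.1
  have hzz' : zz = y - w := by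
    rw [hzz, hw', show y - (z - x) = (x + y) - z by ring]
    exact flfix hnear key.2
  refine ⟨hw', hzz', ?_⟩
  rw [hzz', hw']
  ring
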